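/- For m ∈ ℕ, the number of triples (m1, m2, m3) of nonnegative integers with m1 + m2 + m3 = m − 1, counted up to cyclic permutation, equals ⌈m(m+1)/6⌉. -/
import Mathlib


def cyc (p : ℕ × ℕ × ℕ) : ℕ × ℕ × ℕ := (p.2.1, p.2.2, p.1)

def canon (p : ℕ × ℕ × ℕ) : Prop :=
  (p.1 ≤ p.2.1 ∧ p.1 < p.2.2) ∨ (p.1 = p.2.1 ∧ p.2.1 = p.2.2)

instance : DecidablePred canon := fun p => by unfold canon; infer_instance

lemma canon_exists (p : ℕ × ℕ × ℕ) : canon p ∨ canon (cyc p) ∨ canon (cyc (cyc p)) := by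
  obtain ⟨a, b, c⟩ := p
  simp only [canon, cyc]
  omega

lemma canon_cyc_eq {p : ℕ × ℕ × ℕ} (h1 : canon p) (h2 : canon (cyc p)) : cyc p = p := by
  obtain ⟨a, b, c⟩ := p
  simp only [canon, cyc, Prod.mk.injEq] at *
  omega

lemma canon_cyc2_eq {p : ℕ × ℕ × ℕ} (h1 : canon p) (h2 : canon (cyc (cyc p))) :
    cyc (cyc p) = p := by
  obtain ⟨a, b, c⟩ := p
  simp only [canon, cyc, Prod.mk.injEq] at *
  omega

def orbitSet (p : ℕ × ℕ × ℕ) : Set (ℕ × ℕ × ℕ) := {p, cyc p, cyc (cyc p)}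

lemma cyc3 (p : ℕ × ℕ × ℕ) : cyc (cyc (cyc p)) = p := rfl

lemma orbitSet_cyc (p : ℕ × ℕ × ℕ) : orbitSet (cyc p) = orbitSet p := by
  simp only [orbitSet, cyc3]
  ext q
  simp only [Set.mem_insert_iff, Set.mem_singleton_iff]
  tauto

lemma canon_unique {p q : ℕ × ℕ × ℕ} (hp : canon p) (hq : canon q)
    (h : q ∈ orbitSet p) : q = p := by
  rcases h with h | h | h
  · exact h
  · subst h; exact canon_cyc_eq hp hq
  · subst h; exact canon_cyc2_eq hp hq

lemma sum_cyc (p : ℕ × ℕ × ℕ) : (cyc p).1 + (cyc p).2.1 + (cyc p).2.2 = p.1 + p.2.1 + p.2.2 := by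
  simp only [cyc]; omega

lemma card_orbits (n : ℕ) :
    Nat.card {O : Set (ℕ × ℕ × ℕ) //
      ∃ p : ℕ × ℕ × ℕ, p.1 + p.2.1 + p.2.2 = n ∧
        O = {p, (p.2.1, p.2.2, p.1), (p.2.2, p.1, p.2.1)}} =
    Nat.card {q : ℕ × ℕ × ℕ // q.1 + q.2.1 + q.2.2 = n ∧ canon q} := by
  symm
  apply Nat.card_congr
  apply Equiv.ofBijective (fun q => ⟨orbitSet q.1, q.1, q.2.1, rfl⟩)
  constructor
  · rintro ⟨q, hq, hcq⟩ ⟨q', hq', hcq'⟩ h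
    simp only [Subtype.mk.injEq] at h ⊢
    have : q' ∈ orbitSet q := by rw [h]; left; rfl
    exact (canon_unique hcq hcq' this).symm
  · rintro ⟨O, p, hp, hO⟩
    have hO' : O = orbitSet p := hO
    rcases canon_exists p with h | h | h
    · exact ⟨⟨p, hp, h⟩, by simp [hO']⟩
    · refine ⟨⟨cyc p, by rw [sum_cyc]; exact hp, h⟩, ?_⟩
      simp only [Subtype.mk.injEq]
      rw [orbitSet_cyc, hO']
    · refine ⟨⟨cyc (cyc p), by rw [sum_cyc, sum_cyc]; exact hp, h⟩, ?_⟩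
      simp only [Subtype.mk.injEq]
      rw [orbitSet_cyc, orbitSet_cyc, hO']

def T (n : ℕ) : Finset (ℕ × ℕ × ℕ) :=
  (Finset.Iic n ×ˢ Finset.Iic n ×ˢ Finset.Iic n).filter
    (fun p => p.1 + p.2.1 + p.2.2 = n ∧ canon p)

lemma mem_T {n : ℕ} {p : ℕ × ℕ × ℕ} :
    p ∈ T n ↔ p.1 + p.2.1 + p.2.2 = n ∧ canon p := by
  simp only [T, Finset.mem_filter, Finset.mem_product, Finset.mem_Iic]
  constructor
  · tauto
  · rintro ⟨h, hc⟩; exact ⟨⟨by omega, by omega, by omega⟩, h, hc⟩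

lemma card_canon (n : ℕ) :
    Nat.card {q : ℕ × ℕ × ℕ // q.1 + q.2.1 + q.2.2 = n ∧ canon q} = (T n).card := by
  rw [← Nat.card_eq_finsetCard]
  exact Nat.card_congr (Equiv.subtypeEquivRight fun q => mem_T.symm)

lemma T_step (n : ℕ) : T (n + 3) =
    ((T n).image (fun p => (p.1 + 1, p.2.1 + 1, p.2.2 + 1))) ∪
      ((Finset.range (n + 3)).image (fun b => ((0 : ℕ), b, n + 3 - b))) := by
  ext ⟨a, b, c⟩
  simp only [mem_T, Finset.mem_union, Finset.mem_image, Prod.mk.injEq, Finset.mem_range,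
    canon]
  constructor
  · rintro ⟨hsum, hc⟩
    by_cases ha : a = 0
    · right
      exact ⟨b, by omega, by omega, by omega, by omega⟩
    · left
      refine ⟨(a - 1, b - 1, c - 1), ⟨?_, ?_⟩, ?_, ?_, ?_⟩ <;> dsimp only <;> omega
  · rintro (⟨⟨x, y, z⟩, ⟨hsum, hc⟩, h1, h2, h3⟩ | ⟨d, hd, h1, h2, h3⟩)
    · dsimp only at hsum hc h1 h2 h3 ⊢
      constructor <;> omega
    · constructor <;> omega

lemma T_card_step (n : ℕ) : (T (n + 3)).card = (T n).card + (n + 3) := by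
  rw [T_step, Finset.card_union_of_disjoint, Finset.card_image_of_injective,
    Finset.card_image_of_injOn, Finset.card_range]
  · intro x _ y _ h
    simp only [Prod.mk.injEq] at h
    exact h.2.1
  · intro p q h
    simp only [Prod.mk.injEq] at h
    obtain ⟨p1, p2, p3⟩ := p; obtain ⟨q1, q2, q3⟩ := q
    simp only [Prod.mk.injEq] at h ⊢
    omega
  · rw [Finset.disjoint_left]
    rintro ⟨a, b, c⟩ ha hb
    simp only [Finset.mem_image, Prod.mk.injEq, Finset.mem_range] at ha hb
    obtain ⟨_, _, h1, _, _⟩ := ha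
    obtain ⟨_, _, h1', _, _⟩ := hb
    omega

lemma T_card : ∀ n : ℕ, (T n).card = ((n + 1) * (n + 2) + 5) / 6
  | 0 => by decide
  | 1 => by decide
  | 2 => by decide
  | (n + 3) => by
      rw [T_card_step, T_card n]
      have h : (n + 1) * (n + 2) % 6 = (n + 4) * (n + 5) % 6 := by
        have : (n + 4) * (n + 5) = (n + 1) * (n + 2) + 6 * (n + 3) := by ring
        omega
      have h2 : (n + 4) * (n + 5) = (n + 1) * (n + 2) + 6 * (n + 3) := by ring
      have h3 : (n + 3 + 1) * (n + 3 + 2) = (n + 4) * (n + 5) := by ring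
      omega

/-- For a positive integer `m`, the number of triples `(m₁, m₂, m₃)` of nonnegative
integers with `m₁ + m₂ + m₃ = m - 1`, counted up to cyclic permutation (i.e. the number
of orbits `{p, cyc p, cyc² p}`), equals `⌈m (m + 1) / 6⌉`. -/
theorem stmt5 (m : ℕ) (hm : 1 ≤ m) :
    Nat.card {O : Set (ℕ × ℕ × ℕ) //
      ∃ p : ℕ × ℕ × ℕ, p.1 + p.2.1 + p.2.2 = m - 1 ∧
        O = {p, (p.2.1, p.2.2, p.1), (p.2.2, p.1, p.2.1)}} = (m * (m + 1) + 5) / 6 := by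
  rw [card_orbits, card_canon, T_card]
  have h1 : m - 1 + 1 = m := by omega
  have h2 : m - 1 + 2 = m + 1 := by omega
  rw [h1, h2]
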